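/- Let A be a semilocal Dedekind domain with maximal ideals 𝔪₁,…,𝔪ᵣ, s ∈ 𝔪₁⋯𝔪ᵣ nonzero, K the fraction field of A, and 𝒱 a set of normalized discrete valuations on K containing none of the valuations v₁,…,vᵣ attached to 𝔪₁,…,𝔪ᵣ. Then Qₙ(A,𝒱,s) modulo units of A is the free abelian monoid generated by the irreducible polynomials in Qₙ(A,𝒱,s) with leading coefficient 1. Concretely: every f ∈ Qₙ(A,𝒱,s) can be written as f = u·p₁⋯p_k with u ∈ A^× and p₁,…,p_k polynomials that are irreducible in A[t₁,…,tₙ], belong to Qₙ(A,𝒱,s), and have top coefficient 1; and the multiset {p₁,…,p_k} is uniquely determined by f. Conversely, any such product u·p₁⋯p_k lies in Qₙ(A,𝒱,s). -/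

import Mathlib

open MvPolynomial

/-- The multi-index `(N₁, …, Nₙ)` of the top coefficient of `f`, where
`Nⱼ = deg_{tⱼ} f`. -/
noncomputable def topDeg {A : Type*} [CommSemiring A] {σ : Type*} [Fintype σ]
    (f : MvPolynomial σ A) : σ →₀ ℕ :=
  Finsupp.equivFunOnFinite.symm fun j => degreeOf j f

/-- Membership in `Qₙ(A, 𝒱, s)`: `f` is nonzero and satisfies (Q1), (Q2), (Q2.5), (Q3). -/
def memQ {A : Type*} [CommRing A] [IsDomain A] {K : Type*} [Field K] [Algebra A K]
    [IsFractionRing A K] (𝒱 : Set (Valuation K (WithZero (Multiplicative ℤ)))) (s : A)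
    {n : ℕ} (f : MvPolynomial (Fin n) A) : Prop :=
  f ≠ 0 ∧
  (∀ d : Fin n →₀ ℕ, s ^ (Finset.univ.sup fun j => degreeOf j f - d j) ∣ coeff d f) ∧
  IsUnit (coeff (topDeg f) f) ∧
  (∀ v ∈ 𝒱, ∀ d : Fin n →₀ ℕ,
    v (algebraMap A K (coeff d f)) ≤ v (algebraMap A K (coeff (topDeg f) f))) ∧
  (∀ j : Fin n,
    MvPolynomial.eval₂ (MvPolynomial.C : A →+* MvPolynomial (Fin n) A)
      (fun i => if i = j then 0 else X i) f ≠ 0)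

set_option linter.unusedSectionVars false
set_option maxHeartbeats 1000000

namespace Stmt8

variable {A : Type*} [CommRing A] [IsDomain A] {n : ℕ}

lemma topDeg_apply (f : MvPolynomial (Fin n) A) (j : Fin n) : topDeg f j = degreeOf j f := rfl

lemma topDeg_C (a : A) : topDeg (C a : MvPolynomial (Fin n) A) = 0 :=
  Finsupp.ext fun j => by rw [topDeg_apply, degreeOf_C]; rfl

lemma degreeOf_mul (j : Fin n) (f g : MvPolynomial (Fin n) A) (hf : f ≠ 0) (hg : g ≠ 0) :
    degreeOf j (f * g) = degreeOf j f + degreeOf j g := by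
  obtain ⟨m, rfl⟩ : ∃ m, n = m + 1 := ⟨n - 1, (Nat.succ_pred_eq_of_pos j.pos).symm⟩
  have key : ∀ p : MvPolynomial (Fin (m + 1)) A,
      degreeOf j p = (finSuccEquiv A m (rename (Equiv.swap j 0) p)).natDegree := by
    intro p
    rw [natDegree_finSuccEquiv]
    have h := degreeOf_rename_of_injective (p := p) (f := ⇑(Equiv.swap j 0))
      (Equiv.swap j 0).injective j
    rw [Equiv.swap_apply_left] at h
    exact h.symm
  have hcast : ∀ p : MvPolynomial (Fin (m + 1)) A, p ≠ 0 →
      finSuccEquiv A m (rename (Equiv.swap j 0) p) ≠ 0 := by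
    intro p hp hz
    apply hp
    have h1 : rename (Equiv.swap j 0) p = 0 := (finSuccEquiv A m).injective (by simpa using hz)
    exact (rename_injective _ (Equiv.swap j 0).injective) (by simpa using h1)
  rw [key (f * g), key f, key g, map_mul, map_mul,
    Polynomial.natDegree_mul (hcast f hf) (hcast g hg)]

lemma topDeg_mul (f g : MvPolynomial (Fin n) A) (hf : f ≠ 0) (hg : g ≠ 0) :
    topDeg (f * g) = topDeg f + topDeg g :=
  Finsupp.ext fun j => by
    rw [Finsupp.add_apply, topDeg_apply, topDeg_apply, topDeg_apply, degreeOf_mul j f g hf hg]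

lemma coeff_corner_add (f g : MvPolynomial (Fin n) A) (N M : Fin n →₀ ℕ)
    (hN : ∀ i, degreeOf i f ≤ N i) (hM : ∀ i, degreeOf i g ≤ M i) :
    coeff (N + M) (f * g) = coeff N f * coeff M g := by
  classical
  rw [coeff_mul]
  rw [Finset.sum_eq_single_of_mem (N, M) (Finset.HasAntidiagonal.mem_antidiagonal.mpr rfl)]
  intro b hb hne
  by_contra hcon
  have h1 : coeff b.1 f ≠ 0 := fun h => hcon (by rw [h, zero_mul])
  have h2 : coeff b.2 g ≠ 0 := fun h => hcon (by rw [h, mul_zero])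
  have hb1 : ∀ i, b.1 i ≤ N i := fun i =>
    le_trans (monomial_le_degreeOf i (mem_support_iff.2 h1)) (hN i)
  have hb2 : ∀ i, b.2 i ≤ M i := fun i =>
    le_trans (monomial_le_degreeOf i (mem_support_iff.2 h2)) (hM i)
  have hsum : b.1 + b.2 = N + M := Finset.HasAntidiagonal.mem_antidiagonal.1 hb
  apply hne
  have hkey : ∀ i, b.1 i = N i ∧ b.2 i = M i := by
    intro i
    have := DFunLike.congr_fun hsum i
    simp only [Finsupp.add_apply] at this
    have u1 := hb1 i; have u2 := hb2 i
    omega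
  exact Prod.ext (Finsupp.ext fun i => (hkey i).1) (Finsupp.ext fun i => (hkey i).2)

lemma coeff_topDeg_add (f g : MvPolynomial (Fin n) A) :
    coeff (topDeg f + topDeg g) (f * g) = coeff (topDeg f) f * coeff (topDeg g) g :=
  coeff_corner_add f g _ _ (fun i => le_of_eq (topDeg_apply f i).symm)
    (fun i => le_of_eq (topDeg_apply g i).symm)

lemma exists_unit_of_isUnit {p : MvPolynomial (Fin n) A} (hp : IsUnit p) :
    ∃ u : Aˣ, p = C (u : A) := by
  obtain ⟨q, hpq⟩ := hp.exists_right_inv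
  have hp0 : p ≠ 0 := fun h => by simp [h] at hpq
  have hq0 : q ≠ 0 := fun h => by simp [h] at hpq
  have hdeg : ∀ j, degreeOf j p = 0 := by
    intro j
    have h := degreeOf_mul j p q hp0 hq0
    rw [hpq] at h
    have h1 : degreeOf j (1 : MvPolynomial (Fin n) A) = 0 := by
      rw [show (1 : MvPolynomial (Fin n) A) = C 1 from (C_1).symm, degreeOf_C]
    omega
  have hconst : ∀ (r : MvPolynomial (Fin n) A), (∀ j, degreeOf j r = 0) →
      r = C (coeff 0 r) := by
    intro r hr
    ext d
    rw [coeff_C]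
    split_ifs with h
    · rw [← h]
    · by_contra hc
      apply h
      have hd : ∀ i, d i ≤ degreeOf i r := fun i =>
        monomial_le_degreeOf i (mem_support_iff.2 hc)
      exact (Finsupp.ext fun i => by
        have h2 := hd i; rw [hr i] at h2
        have h3 : d i = 0 := Nat.le_zero.mp h2
        simp [h3]).symm
  have hP := hconst p hdeg
  have hdegq : ∀ j, degreeOf j q = 0 := by
    intro j
    have h := degreeOf_mul j p q hp0 hq0
    rw [hpq] at h
    have h1 : degreeOf j (1 : MvPolynomial (Fin n) A) = 0 := by
      rw [show (1 : MvPolynomial (Fin n) A) = C 1 from (C_1).symm, degreeOf_C]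
    omega
  have hQ := hconst q hdegq
  have hmul : (C (coeff 0 p * coeff 0 q) : MvPolynomial (Fin n) A) = C 1 := by
    rw [map_mul, ← hP, ← hQ, hpq, C_1]
  have h1 : coeff 0 p * coeff 0 q = 1 := C_injective _ _ hmul
  exact ⟨⟨coeff 0 p, coeff 0 q, h1, by rw [mul_comm] at h1; exact h1⟩, hP⟩

lemma q1_iff (s : A) (f : MvPolynomial (Fin n) A) :
    (∀ d : Fin n →₀ ℕ, s ^ (Finset.univ.sup fun j => degreeOf j f - d j) ∣ coeff d f) ↔
    ∀ (j : Fin n) (d : Fin n →₀ ℕ), s ^ (degreeOf j f - d j) ∣ coeff d f := by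
  constructor
  · intro h j d
    exact dvd_trans (pow_dvd_pow s
      (Finset.le_sup (f := fun j => degreeOf j f - d j) (Finset.mem_univ j))) (h d)
  · intro h d
    rcases Finset.eq_empty_or_nonempty (Finset.univ : Finset (Fin n)) with he | hne
    · rw [he, Finset.sup_empty]
      simpa using one_dvd _
    · obtain ⟨j, -, hj⟩ := Finset.exists_mem_eq_sup Finset.univ hne
        (fun j => degreeOf j f - d j)
      rw [hj]; exact h j d

end Stmt8
section GaussB

open MvPolynomial

variable {K : Type*} [Field K] {n : ℕ}

local notation "Γ" => WithZero (Multiplicative ℤ)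

/-- Gauss content of a polynomial w.r.t. a valuation. -/
noncomputable def vc (v : Valuation K Γ) (F : MvPolynomial (Fin n) K) : Γ :=
  F.support.sup fun d => v (coeff d F)

lemma le_vc (v : Valuation K Γ) (F : MvPolynomial (Fin n) K) (d : Fin n →₀ ℕ) :
    v (coeff d F) ≤ vc v F := by
  by_cases h : d ∈ F.support
  · exact Finset.le_sup (f := fun d => v (coeff d F)) h
  · rw [notMem_support_iff.1 h, map_zero]
    exact zero_le'

lemma vc_ne_zero (v : Valuation K Γ) (F : MvPolynomial (Fin n) K) (hF : F ≠ 0) :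
    vc v F ≠ 0 := by
  obtain ⟨d, hd⟩ := ne_zero_iff.1 hF
  have h1 : v (coeff d F) ≠ 0 := v.ne_zero_iff.2 hd
  exact fun h0 => h1 (le_antisymm (le_trans (le_vc v F d) (le_of_eq h0)) zero_le')

lemma val_sum_eq {ι : Type*} (v : Valuation K Γ) (t : Finset ι) (F : ι → K) (i0 : ι)
    (hi0 : i0 ∈ t) (h : ∀ i ∈ t, i ≠ i0 → v (F i) < v (F i0)) :
    v (∑ i ∈ t, F i) = v (F i0) := by
  classical
  rw [← Finset.add_sum_erase _ _ hi0]
  rcases Finset.eq_empty_or_nonempty (t.erase i0) with he | hne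
  · rw [he, Finset.sum_empty, add_zero]
  · obtain ⟨i1, hi1⟩ := hne
    have hlt : ∀ i ∈ t.erase i0, v (F i) < v (F i0) := fun i hi =>
      h i (Finset.mem_of_mem_erase hi) (Finset.ne_of_mem_erase hi)
    have h0 : v (F i0) ≠ 0 := by
      intro hz
      have := hlt i1 hi1
      rw [hz] at this
      exact this.not_ge zero_le'
    exact Valuation.map_add_eq_of_lt_left _ (Valuation.map_sum_lt _ h0 hlt)

lemma vc_mul (v : Valuation K Γ) (F G : MvPolynomial (Fin n) K) (hF : F ≠ 0) (hG : G ≠ 0) :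
    vc v (F * G) = vc v F * vc v G := by
  classical
  have pick : ∀ H : MvPolynomial (Fin n) K, H ≠ 0 → ∃ d0, d0 ∈ H.support ∧
      v (coeff d0 H) = vc v H ∧ ∀ x, toLex d0 < toLex x → v (coeff x H) < vc v H := by
    intro H hH
    set S := H.support.filter (fun d => v (coeff d H) = vc v H) with hS
    have hSne : S.Nonempty := by
      have hsupp : H.support.Nonempty := support_nonempty.2 hH
      obtain ⟨d, hd, hval⟩ := Finset.exists_mem_eq_sup H.support hsupp
        (fun d => v (coeff d H))
      exact ⟨d, Finset.mem_filter.2 ⟨hd, hval.symm⟩⟩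
    obtain ⟨d0, hd0, hmax⟩ := Finset.exists_max_image S (fun d => toLex d) hSne
    refine ⟨d0, (Finset.mem_filter.1 hd0).1, (Finset.mem_filter.1 hd0).2, ?_⟩
    intro x hx
    by_cases hxs : x ∈ H.support
    · rcases (Finset.le_sup (f := fun d => v (coeff d H)) hxs).lt_or_eq with h | h
      · exact h
      · exact absurd (hmax x (Finset.mem_filter.2 ⟨hxs, h⟩)) (not_le.2 hx)
    · rw [notMem_support_iff.1 hxs, map_zero]
      exact zero_le'.lt_of_ne (Ne.symm (vc_ne_zero v H hH))
  obtain ⟨d0, hd0s, hd0v, hd0m⟩ := pick F hF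
  obtain ⟨e0, he0s, he0v, he0m⟩ := pick G hG
  have key : v (coeff (d0 + e0) (F * G)) = vc v F * vc v G := by
    rw [coeff_mul]
    rw [val_sum_eq v _ _ (d0, e0) (Finset.HasAntidiagonal.mem_antidiagonal.mpr rfl) ?_]
    · rw [map_mul, hd0v, he0v]
    · rintro ⟨x, y⟩ hxy hne
      have hsum : x + y = d0 + e0 := Finset.HasAntidiagonal.mem_antidiagonal.1 hxy
      rw [map_mul, map_mul, hd0v, he0v]
      have hxl : toLex d0 < toLex x ∨ toLex e0 < toLex y := by
        rcases lt_trichotomy (toLex x) (toLex d0) with h | h | h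
        · right
          by_contra hy
          push_neg at hy
          have hlt : toLex (x + y) < toLex (d0 + e0) := by
            calc toLex (x + y) = toLex x + toLex y := rfl
              _ < toLex d0 + toLex y := add_lt_add_left h _
              _ ≤ toLex d0 + toLex e0 := add_le_add_right hy _
              _ = toLex (d0 + e0) := rfl
          rw [hsum] at hlt
          exact lt_irrefl _ hlt
        · exfalso
          have hx : x = d0 := toLex.injective h
          apply hne
          subst hx
          have : y = e0 := by
            ext i
            have := DFunLike.congr_fun hsum i
            simp only [Finsupp.add_apply] at this
            omega
          rw [this]
        · left; exact h
      rcases hxl with h | h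
      · have h1 := hd0m x h
        have h2 := le_vc v G y
        calc v (coeff x F) * v (coeff y G) = v (coeff y G) * v (coeff x F) := mul_comm _ _
          _ < vc v G * vc v F := mul_lt_mul_of_le_of_lt_of_nonneg_of_pos h2 h1 zero_le' (zero_lt_iff.2 (vc_ne_zero v G hG))
          _ = vc v F * vc v G := mul_comm _ _
      · exact mul_lt_mul_of_le_of_lt_of_nonneg_of_pos (le_vc v F x) (he0m y h) zero_le' (zero_lt_iff.2 (vc_ne_zero v F hF))
  apply le_antisymm
  · apply Finset.sup_le
    intro d _
    rw [coeff_mul]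
    apply Valuation.map_sum_le
    rintro ⟨x, y⟩ _
    rw [map_mul]
    exact mul_le_mul' (le_vc v F x) (le_vc v G y)
  · rw [← key]
    exact le_vc v (F * G) (d0 + e0)

lemma mul_eq_squeeze {a b a0 b0 : Γ} (ha : a0 ≤ a) (hb : b0 ≤ b) (ha0 : a0 ≠ 0) (hb0 : b0 ≠ 0)
    (h : a * b ≤ a0 * b0) : a = a0 ∧ b = b0 := by
  have h1 : a0 * b0 ≤ a * b0 := mul_le_mul_left ha b0
  have h2 : a * b0 ≤ a * b := mul_le_mul_right hb a
  have ha' : a ≠ 0 := fun h0 => ha0 (le_antisymm (h0 ▸ ha) zero_le')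
  have hab : a * b0 = a * b := le_antisymm h2 (h.trans h1)
  have hb' : b0 = b := mul_left_cancel₀ ha' hab
  refine ⟨?_, hb'.symm⟩
  have h3 : a * b0 = a0 * b0 := le_antisymm (hb' ▸ h) h1
  exact mul_right_cancel₀ hb0 h3

end GaussB
section PartC

open MvPolynomial

variable {K : Type*} [Field K] {n : ℕ}

lemma coeff_scale (t : K) (j : Fin n) (F : MvPolynomial (Fin n) K) (e : Fin n →₀ ℕ) :
    coeff e (aeval (fun i => if i = j then (C t * X j : MvPolynomial (Fin n) K) else X i) F)
      = t ^ (e j) * coeff e F := by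
  classical
  have hmono : ∀ (d : Fin n →₀ ℕ) (a : K),
      (aeval (fun i => if i = j then (C t * X j : MvPolynomial (Fin n) K) else X i))
        (monomial d a) = monomial d (t ^ (d j) * a) := by
    intro d a
    rw [aeval_monomial]
    have hfac : ∀ i ∈ d.support,
        (if i = j then (C t * X j : MvPolynomial (Fin n) K) else X i) ^ d i
          = (if i = j then (C (t ^ d i) : MvPolynomial (Fin n) K) else 1) * X i ^ d i := by
      intro i _
      split_ifs with hij
      · subst hij; rw [mul_pow, ← C_pow]
      · rw [one_mul]
    have hsplit : (d.prod fun i k =>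
          (if i = j then (C t * X j : MvPolynomial (Fin n) K) else X i) ^ k)
        = C (t ^ d j) * d.prod fun i k => (X i : MvPolynomial (Fin n) K) ^ k := by
      rw [Finsupp.prod, Finsupp.prod, Finset.prod_congr rfl hfac, Finset.prod_mul_distrib]
      congr 1
      rw [Finset.prod_ite_eq' d.support j (fun i => (C (t ^ d i) : MvPolynomial (Fin n) K))]
      split_ifs with hj
      · rfl
      · rw [Finsupp.notMem_support_iff.1 hj, pow_zero, map_one]
    rw [hsplit, show (algebraMap K (MvPolynomial (Fin n) K)) a = C a from rfl, monomial_eq,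
      ← mul_assoc, ← map_mul, mul_comm a (t ^ d j)]
  conv_lhs => rw [F.as_sum, map_sum]
  rw [coeff_sum]
  rw [Finset.sum_congr rfl (fun d _ => by rw [hmono d (coeff d F), coeff_monomial])]
  rw [Finset.sum_ite_eq' F.support e (fun d => t ^ (d j) * coeff d F)]
  split_ifs with he
  · rfl
  · rw [notMem_support_iff.1 he, mul_zero]

end PartC

section PartD

open IsDedekindDomain IsDedekindDomain.HeightOneSpectrum UniqueFactorizationMonoid

variable {A : Type*} [CommRing A] [IsDedekindDomain A]

lemma dvd_of_forall_intValuation_le {a b : A} (hb : b ≠ 0)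
    (h : ∀ P : HeightOneSpectrum A, P.intValuation a ≤ P.intValuation b) : b ∣ a := by
  classical
  rcases eq_or_ne a 0 with rfl | ha
  · exact dvd_zero b
  have hIb : Ideal.span {b} ≠ (⊥ : Ideal A) := by simpa [Ideal.span_singleton_eq_bot] using hb
  have hIa : Ideal.span {a} ≠ (⊥ : Ideal A) := by simpa [Ideal.span_singleton_eq_bot] using ha
  rw [← Ideal.span_singleton_le_span_singleton, ← Ideal.dvd_iff_le,
    dvd_iff_normalizedFactors_le_normalizedFactors hIb hIa, Multiset.le_iff_count]
  intro Q
  by_cases hQ : Q ∈ normalizedFactors (Ideal.span {b})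
  swap
  · simp [Multiset.count_eq_zero_of_notMem hQ]
  have hQp : Prime Q := prime_of_normalized_factor Q hQ
  set P : HeightOneSpectrum A := ⟨Q, Ideal.isPrime_of_prime hQp, hQp.ne_zero⟩ with hP
  set cb := Multiset.count Q (normalizedFactors (Ideal.span {b})) with hcb
  have h1 : Q ^ cb ∣ Ideal.span {b} := by
    have hrep : Multiset.replicate cb Q ≤ normalizedFactors (Ideal.span {b}) :=
      Multiset.le_count_iff_replicate_le.1 le_rfl
    have h2 := Multiset.prod_dvd_prod_of_le hrep
    rw [Multiset.prod_replicate] at h2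
    exact h2.trans (prod_normalizedFactors hIb).dvd
  have h2 : P.intValuation b ≤ Multiplicative.ofAdd (-(cb : ℤ)) := by
    rw [show (↑(Multiplicative.ofAdd (-(cb : ℤ))) : WithZero (Multiplicative ℤ)) = WithZero.exp (-(cb : ℤ)) from rfl, intValuation_le_pow_iff_dvd]
    exact h1
  have h3 : P.intValuation a ≤ Multiplicative.ofAdd (-(cb : ℤ)) := le_trans (h P) h2
  rw [show (↑(Multiplicative.ofAdd (-(cb : ℤ))) : WithZero (Multiplicative ℤ)) = WithZero.exp (-(cb : ℤ)) from rfl, intValuation_le_pow_iff_dvd] at h3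
  have h4 := (dvd_iff_normalizedFactors_le_normalizedFactors
    (pow_ne_zero cb hQp.ne_zero) hIa).1 h3
  rw [hQp.irreducible.normalizedFactors_pow, normalize_normalized_factor Q hQ] at h4
  exact Multiset.le_count_iff_replicate_le.2 (le_trans (le_of_eq rfl) h4)

variable {K : Type*} [Field K] [Algebra A K] [IsFractionRing A K]

lemma pval_unit_eq_one (P : HeightOneSpectrum A) {a : A} (ha : IsUnit a) :
    P.valuation (K := K) (algebraMap A K a) = 1 := by
  obtain ⟨u, rfl⟩ := ha
  refine le_antisymm (P.valuation_le_one _) ?_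
  have h2 : P.valuation (K := K) (algebraMap A K ((u⁻¹ : Aˣ) : A)) ≤ 1 := P.valuation_le_one _
  have h3 : P.valuation (K := K) (algebraMap A K (u : A)) *
      P.valuation (K := K) (algebraMap A K ((u⁻¹ : Aˣ) : A)) = 1 := by
    rw [← map_mul, ← map_mul, Units.mul_inv, map_one, map_one]
  calc (1 : WithZero (Multiplicative ℤ)) = _ := h3.symm
    _ ≤ P.valuation (K := K) (algebraMap A K (u : A)) * 1 :=
        mul_le_mul_right h2 _
    _ = _ := mul_one _

end PartD
section PartE

open MvPolynomial

variable {A : Type*} [CommRing A] [IsDomain A] {K : Type*} [Field K] [Algebra A K]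
  [IsFractionRing A K] {n : ℕ}

lemma memQ_C_unit (𝒱 : Set (Valuation K (WithZero (Multiplicative ℤ)))) (s : A)
    {u : A} (hu : IsUnit u) : memQ 𝒱 s (C u : MvPolynomial (Fin n) A) := by
  classical
  have hu0 : u ≠ 0 := hu.ne_zero
  have hC0 : (C u : MvPolynomial (Fin n) A) ≠ 0 :=
    fun h => hu0 (C_injective _ _ (by rw [h, map_zero]))
  refine ⟨hC0, ?_, ?_, ?_, ?_⟩
  · intro d
    have hz : (Finset.univ.sup fun j => degreeOf j (C u : MvPolynomial (Fin n) A) - d j)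
        = 0 := by
      apply Nat.le_zero.1
      apply Finset.sup_le
      intro j _
      rw [degreeOf_C]
      omega
    rw [hz, pow_zero]
    exact one_dvd _
  · rw [Stmt8.topDeg_C, coeff_zero_C]; exact hu
  · intro v hv d
    rw [Stmt8.topDeg_C, coeff_zero_C, coeff_C]
    split_ifs with h
    · exact le_rfl
    · rw [map_zero, map_zero]
      exact zero_le'
  · intro j
    rw [eval₂_C]
    exact hC0

lemma memQ_mul (𝒱 : Set (Valuation K (WithZero (Multiplicative ℤ)))) (s : A)
    {f g : MvPolynomial (Fin n) A} (hf : memQ 𝒱 s f) (hg : memQ 𝒱 s g) :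
    memQ 𝒱 s (f * g) := by
  classical
  obtain ⟨hf0, hf1, hf2, hf25, hf3⟩ := hf
  obtain ⟨hg0, hg1, hg2, hg25, hg3⟩ := hg
  have hfg0 : f * g ≠ 0 := mul_ne_zero hf0 hg0
  have htop := Stmt8.topDeg_mul f g hf0 hg0
  have hcorner : coeff (topDeg (f * g)) (f * g) = coeff (topDeg f) f * coeff (topDeg g) g := by
    rw [htop]; exact Stmt8.coeff_topDeg_add f g
  refine ⟨hfg0, ?_, ?_, ?_, ?_⟩
  · rw [Stmt8.q1_iff]
    intro j d
    rw [coeff_mul]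
    apply Finset.dvd_sum
    rintro ⟨x, y⟩ hxy
    have hxy' : x + y = d := Finset.HasAntidiagonal.mem_antidiagonal.1 hxy
    have hj : x j + y j = d j := by
      have := DFunLike.congr_fun hxy' j
      simpa [Finsupp.add_apply] using this
    have hdeg := Stmt8.degreeOf_mul j f g hf0 hg0
    have hle : degreeOf j (f * g) - d j ≤ (degreeOf j f - x j) + (degreeOf j g - y j) := by
      rw [hdeg]; omega
    refine dvd_trans (pow_dvd_pow s hle) ?_
    rw [pow_add]
    exact mul_dvd_mul ((Stmt8.q1_iff s f).1 hf1 j x) ((Stmt8.q1_iff s g).1 hg1 j y)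
  · rw [hcorner]; exact hf2.mul hg2
  · intro v hv d
    have hrhs : v (algebraMap A K (coeff (topDeg (f * g)) (f * g)))
        = v (algebraMap A K (coeff (topDeg f) f)) * v (algebraMap A K (coeff (topDeg g) g)) := by
      rw [hcorner, map_mul, map_mul]
    rw [hrhs, coeff_mul, map_sum]
    apply Valuation.map_sum_le
    rintro ⟨x, y⟩ _
    rw [map_mul, map_mul]
    exact mul_le_mul' (hf25 v hv x) (hg25 v hv y)
  · intro j
    rw [eval₂_mul]
    exact mul_ne_zero (hf3 j) (hg3 j)

end PartE
section PartF

open MvPolynomial IsDedekindDomain IsDedekindDomain.HeightOneSpectrum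

variable {A : Type*} [CommRing A] [IsDedekindDomain A] {K : Type*} [Field K] [Algebra A K]
  [IsFractionRing A K] {n : ℕ}

lemma memQ_of_mul_left (𝒱 : Set (Valuation K (WithZero (Multiplicative ℤ)))) (s : A)
    (hs0 : s ≠ 0) {f g : MvPolynomial (Fin n) A}
    (h : memQ 𝒱 s (f * g)) : memQ 𝒱 s f := by
  classical
  obtain ⟨h0, h1, h2, h25, h3⟩ := h
  have hf0 : f ≠ 0 := left_ne_zero_of_mul h0
  have hg0 : g ≠ 0 := right_ne_zero_of_mul h0
  have htop := Stmt8.topDeg_mul f g hf0 hg0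
  have hcorner : coeff (topDeg (f * g)) (f * g) = coeff (topDeg f) f * coeff (topDeg g) g := by
    rw [htop]; exact Stmt8.coeff_topDeg_add f g
  have hcf : IsUnit (coeff (topDeg f) f) := isUnit_of_mul_isUnit_left (hcorner ▸ h2)
  have hcg : IsUnit (coeff (topDeg g) g) := isUnit_of_mul_isUnit_right (hcorner ▸ h2)
  have hφ : Function.Injective (algebraMap A K) := IsFractionRing.injective A K
  have hmapmul : MvPolynomial.map (algebraMap A K) (f * g)
      = MvPolynomial.map (algebraMap A K) f * MvPolynomial.map (algebraMap A K) g :=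
    map_mul _ f g
  have hinj : Function.Injective
      (MvPolynomial.map (algebraMap A K) : MvPolynomial (Fin n) A → MvPolynomial (Fin n) K) :=
    MvPolynomial.map_injective _ hφ
  have hF0 : MvPolynomial.map (algebraMap A K) f ≠ 0 :=
    fun hz => hf0 (hinj (by rw [hz, map_zero]))
  have hG0 : MvPolynomial.map (algebraMap A K) g ≠ 0 :=
    fun hz => hg0 (hinj (by rw [hz, map_zero]))
  have hcfK : algebraMap A K (coeff (topDeg f) f) ≠ 0 :=
    fun hz => hcf.ne_zero (hφ (by rw [hz, map_zero]))
  have hcgK : algebraMap A K (coeff (topDeg g) g) ≠ 0 :=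
    fun hz => hcg.ne_zero (hφ (by rw [hz, map_zero]))
  refine ⟨hf0, ?_, hcf, ?_, ?_⟩
  -- Q1
  · rw [Stmt8.q1_iff]
    intro j d
    rcases eq_or_ne (coeff d f) 0 with hz | hdne
    · rw [hz]; exact dvd_zero _
    have hdj : d j ≤ degreeOf j f := monomial_le_degreeOf j (mem_support_iff.2 hdne)
    apply dvd_of_forall_intValuation_le (pow_ne_zero _ hs0)
    intro P
    rw [← P.valuation_of_algebraMap (K := K) (coeff d f),
      ← P.valuation_of_algebraMap (K := K) (s ^ (degreeOf j f - d j))]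
    set w := P.valuation (K := K) with hw
    set c := w (algebraMap A K s) with hc
    have hsAll : ∀ x : A, w (algebraMap A K x) ≤ 1 := fun x => P.valuation_le_one x
    have hc0 : c ≠ 0 := w.ne_zero_iff.2 (fun hz => hs0 (hφ (by rw [hz, map_zero])))
    set τ : MvPolynomial (Fin n) K →ₐ[K] MvPolynomial (Fin n) K :=
      aeval (fun i => if i = j then (C (algebraMap A K s) * X j : MvPolynomial (Fin n) K)
        else X i) with hτ
    have hcoeffτ : ∀ (H : MvPolynomial (Fin n) A) (e : Fin n →₀ ℕ),
        coeff e (τ (MvPolynomial.map (algebraMap A K) H))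
          = (algebraMap A K s) ^ (e j) * algebraMap A K (coeff e H) := by
      intro H e
      rw [hτ]
      rw [coeff_scale (algebraMap A K s) j (MvPolynomial.map (algebraMap A K) H) e, coeff_map]
    have hNj := Stmt8.degreeOf_mul j f g hf0 hg0
    -- upper bound on content of τ (F*G)
    have hupper : vc w (τ (MvPolynomial.map (algebraMap A K) f
        * MvPolynomial.map (algebraMap A K) g)) ≤ c ^ (degreeOf j (f * g)) := by
      apply Finset.sup_le
      intro e he
      have he' := mem_support_iff.1 he
      rw [← hmapmul] at he' ⊢
      have hcoe := hcoeffτ (f * g) e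
      have heS : coeff e (f * g) ≠ 0 := by
        intro hzz
        apply he'
        rw [hcoe, hzz, map_zero, mul_zero]
      have hej : e j ≤ degreeOf j (f * g) := monomial_le_degreeOf j (mem_support_iff.2 heS)
      obtain ⟨b, hb⟩ := (Stmt8.q1_iff s (f * g)).1 h1 j e
      have hvw : w (coeff e (τ (MvPolynomial.map (algebraMap A K) (f * g))))
          = c ^ (e j) * (c ^ (degreeOf j (f * g) - e j) * w (algebraMap A K b)) := by
        rw [hcoe, hb, map_mul (algebraMap A K), map_pow (algebraMap A K),
          map_mul w, map_mul w, map_pow w, map_pow w]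
      rw [hvw]
      calc c ^ (e j) * (c ^ (degreeOf j (f * g) - e j) * w (algebraMap A K b))
          ≤ c ^ (e j) * (c ^ (degreeOf j (f * g) - e j) * 1) :=
            mul_le_mul_right (mul_le_mul_right (hsAll b) _) _
        _ = c ^ (e j + (degreeOf j (f * g) - e j)) := by rw [mul_one, ← pow_add]
        _ = c ^ (degreeOf j (f * g)) := by congr 1; omega
    -- lower bounds
    have hlow : ∀ (p : MvPolynomial (Fin n) A), p ≠ 0 → IsUnit (coeff (topDeg p) p) →
        c ^ (degreeOf j p) ≤ vc w (τ (MvPolynomial.map (algebraMap A K) p)) := by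
      intro p hp0 hcp
      have hle := le_vc w (τ (MvPolynomial.map (algebraMap A K) p)) (topDeg p)
      have hco := hcoeffτ p (topDeg p)
      rw [Stmt8.topDeg_apply] at hco
      rw [hco, map_mul, map_pow] at hle
      have hone : w (algebraMap A K (coeff (topDeg p) p)) = 1 := pval_unit_eq_one P hcp
      rwa [hone, mul_one] at hle
    have hτ0 : ∀ (p : MvPolynomial (Fin n) A), p ≠ 0 → IsUnit (coeff (topDeg p) p) →
        τ (MvPolynomial.map (algebraMap A K) p) ≠ 0 := by
      intro p hp0 hcp hz
      have hco := hcoeffτ p (topDeg p)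
      rw [hz, coeff_zero] at hco
      have hcpK : algebraMap A K (coeff (topDeg p) p) ≠ 0 :=
        fun hzz => hcp.ne_zero (hφ (by rw [hzz, map_zero]))
      have hsK : algebraMap A K s ≠ 0 := fun hzz => hs0 (hφ (by rw [hzz, map_zero]))
      exact (mul_ne_zero (pow_ne_zero _ hsK) hcpK) hco.symm
    have hmulτ : vc w (τ (MvPolynomial.map (algebraMap A K) f))
        * vc w (τ (MvPolynomial.map (algebraMap A K) g))
        = vc w (τ (MvPolynomial.map (algebraMap A K) f
            * MvPolynomial.map (algebraMap A K) g)) := by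
      rw [map_mul τ, vc_mul w _ _ (hτ0 f hf0 hcf) (hτ0 g hg0 hcg)]
    have hbound : vc w (τ (MvPolynomial.map (algebraMap A K) f))
        * vc w (τ (MvPolynomial.map (algebraMap A K) g))
        ≤ c ^ (degreeOf j f) * c ^ (degreeOf j g) := by
      rw [hmulτ]
      calc vc w (τ (MvPolynomial.map (algebraMap A K) f
          * MvPolynomial.map (algebraMap A K) g)) ≤ c ^ (degreeOf j (f * g)) := hupper
        _ = c ^ (degreeOf j f) * c ^ (degreeOf j g) := by rw [hNj, pow_add]
    obtain ⟨hFeq, -⟩ := mul_eq_squeeze (hlow f hf0 hcf) (hlow g hg0 hcg)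
      (pow_ne_zero _ hc0) (pow_ne_zero _ hc0) hbound
    have hled := le_vc w (τ (MvPolynomial.map (algebraMap A K) f)) d
    rw [hcoeffτ f d, hFeq, map_mul, map_pow] at hled
    have hgoal : w (algebraMap A K (coeff d f)) ≤ c ^ (degreeOf j f - d j) := by
      have hsplit : c ^ (degreeOf j f) = c ^ (d j) * c ^ (degreeOf j f - d j) := by
        rw [← pow_add]; congr 1; omega
      rw [hsplit] at hled
      have hcd : (c ^ (d j)) ≠ 0 := pow_ne_zero _ hc0
      have h5 := mul_le_mul_right hled (c ^ (d j))⁻¹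
      rwa [← mul_assoc, ← mul_assoc, inv_mul_cancel₀ hcd, one_mul, one_mul] at h5
    calc w (algebraMap A K (coeff d f)) ≤ c ^ (degreeOf j f - d j) := hgoal
      _ = w (algebraMap A K (s ^ (degreeOf j f - d j))) := by rw [map_pow, map_pow]
  -- Q2.5
  · intro v hv d
    have hvcFG : vc v (MvPolynomial.map (algebraMap A K) f
        * MvPolynomial.map (algebraMap A K) g)
        = v (algebraMap A K (coeff (topDeg (f * g)) (f * g))) := by
      apply le_antisymm
      · apply Finset.sup_le
        intro e _
        rw [← hmapmul, coeff_map]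
        exact h25 v hv e
      · have hle := le_vc v (MvPolynomial.map (algebraMap A K) f
            * MvPolynomial.map (algebraMap A K) g) (topDeg (f * g))
        rw [← hmapmul, coeff_map, hmapmul] at hle
        exact hle
    have hvmul := vc_mul v _ _ hF0 hG0
    have hlowF : v (algebraMap A K (coeff (topDeg f) f))
        ≤ vc v (MvPolynomial.map (algebraMap A K) f) := by
      have hle := le_vc v (MvPolynomial.map (algebraMap A K) f) (topDeg f)
      rwa [coeff_map] at hle
    have hlowG : v (algebraMap A K (coeff (topDeg g) g))
        ≤ vc v (MvPolynomial.map (algebraMap A K) g) := by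
      have hle := le_vc v (MvPolynomial.map (algebraMap A K) g) (topDeg g)
      rwa [coeff_map] at hle
    have hbound : vc v (MvPolynomial.map (algebraMap A K) f)
        * vc v (MvPolynomial.map (algebraMap A K) g)
        ≤ v (algebraMap A K (coeff (topDeg f) f)) * v (algebraMap A K (coeff (topDeg g) g)) := by
      apply le_of_eq
      refine hvmul.symm.trans (hvcFG.trans ?_)
      rw [hcorner, map_mul, map_mul]
    obtain ⟨hFeq, -⟩ := mul_eq_squeeze hlowF hlowG
      (v.ne_zero_iff.2 hcfK) (v.ne_zero_iff.2 hcgK) hbound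
    have hle := le_vc v (MvPolynomial.map (algebraMap A K) f) d
    rwa [coeff_map, hFeq] at hle
  -- Q3
  · intro j
    have := h3 j
    rw [eval₂_mul] at this
    exact left_ne_zero_of_mul this

lemma memQ_of_mul_right (𝒱 : Set (Valuation K (WithZero (Multiplicative ℤ)))) (s : A)
    (hs0 : s ≠ 0) {f g : MvPolynomial (Fin n) A}
    (h : memQ 𝒱 s (f * g)) : memQ 𝒱 s g :=
  memQ_of_mul_left 𝒱 s hs0 (by rwa [mul_comm] at h)

end PartF

section PartG

open MvPolynomial

variable {A : Type*} [CommRing A] [IsDomain A] {n : ℕ}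

lemma corner_C_mul {c : A} (hc : c ≠ 0) {q : MvPolynomial (Fin n) A} (hq : q ≠ 0) :
    topDeg (C c * q) = topDeg q ∧
      coeff (topDeg (C c * q)) (C c * q) = c * coeff (topDeg q) q := by
  have hC0 : (C c : MvPolynomial (Fin n) A) ≠ 0 :=
    fun h => hc (C_injective _ _ (by rw [h, map_zero]))
  have h1 : topDeg (C c * q) = topDeg q := by
    rw [Stmt8.topDeg_mul (C c) q hC0 hq, Stmt8.topDeg_C, zero_add]
  refine ⟨h1, ?_⟩
  have h2 := Stmt8.coeff_topDeg_add (C c) q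
  rw [Stmt8.topDeg_C, zero_add, coeff_zero_C] at h2
  rw [h1]
  exact h2

lemma assoc_corner_eq {p q : MvPolynomial (Fin n) A} (hpq : Associated p q) (hp0 : p ≠ 0)
    (hcp : coeff (topDeg p) p = 1) (hcq : coeff (topDeg q) q = 1) : p = q := by
  obtain ⟨e, he⟩ := hpq
  obtain ⟨cu, hcu⟩ := Stmt8.exists_unit_of_isUnit e.isUnit
  have hq : q = C (cu : A) * p := by rw [← he, hcu, mul_comm]
  have hcc := (corner_C_mul (cu.ne_zero) hp0).2
  rw [← hq] at hcc
  rw [hcq, hcp, mul_one] at hcc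
  rw [hq, ← hcc, map_one, one_mul]

lemma isUnit_multiset_prod (m : Multiset A) (h : ∀ x ∈ m, IsUnit x) : IsUnit m.prod := by
  induction m using Multiset.induction_on with
  | empty => simpa using isUnit_one
  | cons a s ih =>
    rw [Multiset.prod_cons]
    exact (h a (Multiset.mem_cons_self a s)).mul
      (ih fun x hx => h x (Multiset.mem_cons_of_mem hx))

end PartG


/-- Corollary 5.8.  `Qₙ(A,𝒱,s)` modulo units of `A` is the free abelian
monoid on the irreducible polynomials in `Qₙ(A,𝒱,s)` with leading (top) coefficient `1`:
every `f ∈ Qₙ(A,𝒱,s)` is `u·p₁⋯p_k` with `u ∈ A^×` and the `pᵢ` irreducible, in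
`Qₙ(A,𝒱,s)` and with top coefficient `1`, the multiset `{p₁,…,p_k}` being uniquely
determined by `f`; conversely every such product lies in `Qₙ(A,𝒱,s)`. -/
theorem stmt_8 {A : Type*} [CommRing A] [IsDedekindDomain A] (hA : ¬ IsField A)
    (hfin : {I : Ideal A | I.IsMaximal}.Finite)
    {K : Type*} [Field K] [Algebra A K] [IsFractionRing A K]
    (𝒱 : Set (Valuation K (WithZero (Multiplicative ℤ))))
    (hnorm : ∀ v ∈ 𝒱, Function.Surjective v)
    (hnot : ∀ v ∈ 𝒱, ∀ P : IsDedekindDomain.HeightOneSpectrum A,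
      v ≠ P.valuation (K := K))
    (s : A) (hs0 : s ≠ 0) (hs : ∀ m : Ideal A, m.IsMaximal → s ∈ m)
    {n : ℕ} :
    (∀ f : MvPolynomial (Fin n) A, memQ 𝒱 s f →
      ∃ (u : Aˣ) (P : Multiset (MvPolynomial (Fin n) A)),
        (∀ p ∈ P, Irreducible p ∧ memQ 𝒱 s p ∧ coeff (topDeg p) p = 1) ∧
        f = C (u : A) * P.prod ∧
        (∀ (u' : Aˣ) (P' : Multiset (MvPolynomial (Fin n) A)),
          (∀ p ∈ P', Irreducible p ∧ memQ 𝒱 s p ∧ coeff (topDeg p) p = 1) →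
          f = C (u' : A) * P'.prod → P' = P)) ∧
    (∀ (u : Aˣ) (P : Multiset (MvPolynomial (Fin n) A)),
      (∀ p ∈ P, Irreducible p ∧ memQ 𝒱 s p ∧ coeff (topDeg p) p = 1) →
      memQ 𝒱 s (C (u : A) * P.prod)) := by
  classical
  haveI hPIR : IsPrincipalIdealRing A := IsPrincipalIdealRing.of_finite_primes (R := A) (by
    apply Set.Finite.subset (hfin.insert ⊥)
    rintro I hI
    rcases eq_or_ne I ⊥ with rfl | hne
    · exact Set.mem_insert _ _
    · exact Set.mem_insert_of_mem _ (Ideal.IsPrime.isMaximal hI hne))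
  -- converse direction first
  have hconv : ∀ (u : Aˣ) (P : Multiset (MvPolynomial (Fin n) A)),
      (∀ p ∈ P, Irreducible p ∧ memQ 𝒱 s p ∧ coeff (topDeg p) p = 1) →
      memQ 𝒱 s (C (u : A) * P.prod) := by
    intro u P
    induction P using Multiset.induction_on with
    | empty =>
      intro _
      have := memQ_C_unit (n := n) 𝒱 s u.isUnit
      simpa using this
    | cons p P ih =>
      intro hP
      have h1 : memQ 𝒱 s p := (hP p (Multiset.mem_cons_self p P)).2.1
      have h2 := ih (fun q hq => hP q (Multiset.mem_cons_of_mem hq))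
      rw [Multiset.prod_cons, show C (u : A) * (p * P.prod) = p * (C (u : A) * P.prod) by ring]
      exact memQ_mul 𝒱 s h1 h2
  refine ⟨?_, hconv⟩
  intro f hf
  obtain ⟨P₀, hP₀prime, hassoc⟩ := UniqueFactorizationMonoid.exists_prime_factors f hf.1
  obtain ⟨w, hw⟩ := hassoc
  obtain ⟨u₀, hu₀⟩ := Stmt8.exists_unit_of_isUnit w.isUnit
  have hmemP₀ : ∀ p ∈ P₀, memQ 𝒱 s p := by
    intro p hp
    obtain ⟨r, hr⟩ : p ∣ f := Dvd.dvd.trans (Multiset.dvd_prod hp) ⟨(w : MvPolynomial (Fin n) A), hw.symm⟩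
    exact memQ_of_mul_left 𝒱 s hs0 (hr ▸ hf)
  set ci : MvPolynomial (Fin n) A → A := fun p => Ring.inverse (coeff (topDeg p) p) with hci
  set P : Multiset (MvPolynomial (Fin n) A) := P₀.map (fun p => C (ci p) * p) with hPdef
  have hciu : ∀ p ∈ P₀, IsUnit (ci p) := by
    intro p hp
    obtain ⟨vu, hvu⟩ := (hmemP₀ p hp).2.2.1
    rw [hci]
    simp only [← hvu, Ring.inverse_unit]
    exact (vu⁻¹).isUnit
  have hPmem : ∀ q ∈ P, Irreducible q ∧ memQ 𝒱 s q ∧ coeff (topDeg q) q = 1 := by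
    intro q hq
    rw [hPdef] at hq
    obtain ⟨p, hp, rfl⟩ := Multiset.mem_map.1 hq
    have hpmem := hmemP₀ p hp
    have hp0 : p ≠ 0 := hpmem.1
    have hciu' := hciu p hp
    have hirr : Irreducible p := (hP₀prime p hp).irreducible
    refine ⟨?_, ?_, ?_⟩
    · have hunitC : IsUnit (C (ci p) : MvPolynomial (Fin n) A) := hciu'.map C
      have hassoc' : Associated p (C (ci p) * p) :=
        ⟨hunitC.unit, by rw [IsUnit.unit_spec, mul_comm]⟩
      exact hassoc'.irreducible hirr
    · exact memQ_mul 𝒱 s (memQ_C_unit 𝒱 s hciu') hpmem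
    · have := (corner_C_mul hciu'.ne_zero hp0).2
      rw [this, hci]
      exact Ring.inverse_mul_cancel _ hpmem.2.2.1
  -- the product of the normalizing constants
  set cprod : A := (P₀.map ci).prod with hcprod
  have hcu : IsUnit cprod := isUnit_multiset_prod _ (by
    intro x hx
    obtain ⟨p, hp, rfl⟩ := Multiset.mem_map.1 hx
    exact hciu p hp)
  have hPprod : P.prod = C cprod * P₀.prod := by
    rw [hPdef, Multiset.prod_map_mul]
    congr 1
    · rw [hcprod, map_multiset_prod (C : A →+* MvPolynomial (Fin n) A) (P₀.map ci),
        Multiset.map_map]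
      simp [Function.comp]
    · rw [Multiset.map_id']
  have hfeq : f = C ((u₀ * hcu.unit⁻¹ : Aˣ) : A) * P.prod := by
    rw [hPprod, Units.val_mul, map_mul, ← hw, hu₀]
    have hone : (C ((hcu.unit⁻¹ : Aˣ) : A) : MvPolynomial (Fin n) A) * C cprod = 1 := by
      rw [← map_mul]
      rw [hcu.val_inv_mul, map_one]
    calc P₀.prod * C (u₀ : A)
        = C (u₀ : A) * (1 * P₀.prod) := by ring
      _ = C (u₀ : A) * (C ((hcu.unit⁻¹ : Aˣ) : A) * C cprod * P₀.prod) := by rw [hone]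
      _ = C (u₀ : A) * C ((hcu.unit⁻¹ : Aˣ) : A) * (C cprod * P₀.prod) := by ring
  refine ⟨u₀ * hcu.unit⁻¹, P, hPmem, hfeq, ?_⟩
  intro u' P' hP' hfeq'
  have key : ∀ (uu : Aˣ) (PP : Multiset (MvPolynomial (Fin n) A)),
      f = C (uu : A) * PP.prod → Associated PP.prod f := by
    intro uu PP hfe
    exact ⟨(uu.isUnit.map (C : A →+* MvPolynomial (Fin n) A)).unit, by
      rw [IsUnit.unit_spec, mul_comm, ← hfe]⟩
  have hassocPP : Associated P'.prod P.prod :=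
    (key u' P' hfeq').trans (key (u₀ * hcu.unit⁻¹) P hfeq).symm
  have hrel := UniqueFactorizationMonoid.factors_unique
    (fun x hx => (hP' x hx).1) (fun x hx => (hPmem x hx).1) hassocPP
  apply Multiset.rel_eq.1
  apply hrel.mono
  intro a ha b hb hab
  exact assoc_corner_eq hab (hP' a ha).2.1.1 (hP' a ha).2.2 (hPmem b hb).2.2
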